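/- (Theorem 3.1, case d=3; leading asymptotics of the scattering amplitude.) There exist constants C > 0 and κ₀ > 0 such that for all κ ≥ κ₀ the matrix A(κ) is invertible and for all k, ℓ ∈ ℝ³ with |k| = |ℓ| = κ one has |f(k,ℓ) − κ^{−1} Σ_{j=1}^n (−i/(2π²)) e^{i(k−ℓ)·y_j} − κ^{−2} [ −Σ_{j=1}^n (2α_j/π) e^{i(k−ℓ)·y_j} + Σ_{j≠j'} e^{iκ|y_j−y_{j'}|}/(2π²|y_j−y_{j'}|) · e^{i(k·y_j − ℓ·y_{j'})} ]| ≤ C κ^{−3}. -/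

import Mathlib

open Complex Finset Matrix

attribute [local instance] Matrix.linftyOpNormedRing Matrix.linftyOpNormedAlgebra

noncomputable section

/-- The matrix `A(κ)` for a three-dimensional multipoint potential:
`A(κ)_{jj} = α_j - iκ/(4π)`,
`A(κ)_{jj'} = -e^{iκ‖y_j - y_{j'}‖}/(4π‖y_j - y_{j'}‖)` for `j ≠ j'`. -/
def A3 (n : ℕ) (y : Fin n → EuclideanSpace ℝ (Fin 3)) (α : Fin n → ℂ) (κ : ℝ) :
    Matrix (Fin n) (Fin n) ℂ :=
  fun j j' =>
    if j = j' then α j - Complex.I * κ / (4 * Real.pi)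
    else -Complex.exp (Complex.I * κ * ‖y j - y j'‖) / (4 * Real.pi * ‖y j - y j'‖)

/-- `q(k) = A(κ)⁻¹ b(k)` with `b(k)_j = -e^{i k·y_j}`. -/
def q3 (n : ℕ) (y : Fin n → EuclideanSpace ℝ (Fin 3)) (α : Fin n → ℂ) (κ : ℝ)
    (k : EuclideanSpace ℝ (Fin 3)) : Fin n → ℂ :=
  (A3 n y α κ)⁻¹ *ᵥ fun j => -Complex.exp (Complex.I * (inner ℝ k (y j) : ℝ))

/-- The scattering amplitude `f(k,ℓ) = (2π)⁻³ Σ_j q_j(k) e^{-iℓ·y_j}`. -/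
def f3 (n : ℕ) (y : Fin n → EuclideanSpace ℝ (Fin 3)) (α : Fin n → ℂ) (κ : ℝ)
    (k ℓ : EuclideanSpace ℝ (Fin 3)) : ℂ :=
  ((2 * Real.pi : ℂ) ^ 3)⁻¹ *
    ∑ j, q3 n y α κ k j * Complex.exp (-Complex.I * (inner ℝ ℓ (y j) : ℝ))

/-- The matrix `W(κ)`: `W(κ)_{jj} = α_j`,
`W(κ)_{jj'} = -e^{iκ‖y_j - y_{j'}‖}/(4π‖y_j - y_{j'}‖)` for `j ≠ j'`. -/
def W3 (n : ℕ) (y : Fin n → EuclideanSpace ℝ (Fin 3)) (α : Fin n → ℂ) (κ : ℝ) :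
    Matrix (Fin n) (Fin n) ℂ :=
  fun j j' =>
    if j = j' then α j
    else -Complex.exp (Complex.I * κ * ‖y j - y j'‖) / (4 * Real.pi * ‖y j - y j'‖)

/-- The coefficients `C_m(k,ℓ) = Σ_{j,j'} [W(κ)^m]_{jj'} e^{i(k·y_{j'} - ℓ·y_j)}`. -/
def C3coef (n : ℕ) (y : Fin n → EuclideanSpace ℝ (Fin 3)) (α : Fin n → ℂ) (κ : ℝ)
    (m : ℕ) (k ℓ : EuclideanSpace ℝ (Fin 3)) : ℂ :=
  ∑ j, ∑ j', (W3 n y α κ ^ m) j j' *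
    Complex.exp (Complex.I * ((inner ℝ k (y j') : ℝ) - (inner ℝ ℓ (y j) : ℝ)))

lemma entry_le_norm {n : ℕ} (P : Matrix (Fin n) (Fin n) ℂ) (i j : Fin n) : ‖P i j‖ ≤ ‖P‖ := by
  rw [Matrix.linfty_opNorm_def]
  have h1 : ‖P i j‖₊ ≤ ∑ j', ‖P i j'‖₊ :=
    Finset.single_le_sum (f := fun j' => ‖P i j'‖₊) (fun _ _ => zero_le) (Finset.mem_univ j)
  have h2 : (∑ j', ‖P i j'‖₊) ≤ Finset.univ.sup fun i => ∑ j', ‖P i j'‖₊ :=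
    Finset.le_sup (f := fun i => ∑ j', ‖P i j'‖₊) (Finset.mem_univ i)
  exact_mod_cast h1.trans h2

lemma norm_le_sum_entries {n : ℕ} (P : Matrix (Fin n) (Fin n) ℂ) :
    ‖P‖ ≤ ∑ i, ∑ j, ‖P i j‖ := by
  rw [Matrix.linfty_opNorm_def]
  have h : (Finset.univ.sup fun i => ∑ j, ‖P i j‖₊) ≤ ∑ i, ∑ j, ‖P i j‖₊ :=
    Finset.sup_le fun i _ =>
      Finset.single_le_sum (f := fun i => ∑ j, ‖P i j‖₊) (fun _ _ => zero_le) (Finset.mem_univ i)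
  calc ((Finset.univ.sup fun i => ∑ j, ‖P i j‖₊ : NNReal) : ℝ)
      ≤ ((∑ i, ∑ j, ‖P i j‖₊ : NNReal) : ℝ) := by exact_mod_cast h
    _ = ∑ i, ∑ j, ‖P i j‖ := by push_cast; rfl

lemma norm_one_le {n : ℕ} : ‖(1 : Matrix (Fin n) (Fin n) ℂ)‖ ≤ 1 := by
  rcases Nat.eq_zero_or_pos n with h | h
  · subst h
    have : (1 : Matrix (Fin 0) (Fin 0) ℂ) = 0 := Subsingleton.elim _ _
    rw [this, norm_zero]; norm_num
  · haveI : Nonempty (Fin n) := ⟨⟨0, h⟩⟩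
    rw [norm_one]

lemma cexp_norm (t : ℝ) : ‖Complex.exp (Complex.I * (t : ℂ))‖ = 1 := by
  rw [Complex.norm_exp]
  simp

lemma arith_final (nn E κ S : ℝ) (hE : 0 ≤ E) (hκ : 0 < κ) (hn : 0 ≤ nn)
    (hS : S ≤ nn * (nn * (E * (E * 2)))) :
    ((2 * Real.pi) ^ 3)⁻¹ * (4 * Real.pi / κ * (4 * Real.pi / κ * (4 * Real.pi / κ))) * S ≤
      (16 * nn ^ 2 * E ^ 2 + 1) / κ ^ 3 := by
  have hπ : 0 < Real.pi := Real.pi_pos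
  have h1 : ((2 * Real.pi) ^ 3)⁻¹ * (4 * Real.pi / κ * (4 * Real.pi / κ * (4 * Real.pi / κ))) * S ≤
      ((2 * Real.pi) ^ 3)⁻¹ * (4 * Real.pi / κ * (4 * Real.pi / κ * (4 * Real.pi / κ))) *
      (nn * (nn * (E * (E * 2)))) := by
    refine mul_le_mul_of_nonneg_left hS (by positivity)
  refine h1.trans ?_
  have h2 : ((2 * Real.pi) ^ 3)⁻¹ * (4 * Real.pi / κ * (4 * Real.pi / κ * (4 * Real.pi / κ))) *
      (nn * (nn * (E * (E * 2)))) = 16 * nn ^ 2 * E ^ 2 / κ ^ 3 := by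
    field_simp
    ring
  rw [h2]
  gcongr
  linarith

/-- Theorem 3.1, case d = 3: leading asymptotics of the scattering amplitude. -/
theorem stmt2 (n : ℕ) (y : Fin n → EuclideanSpace ℝ (Fin 3)) (α : Fin n → ℂ)
    (hy : Function.Injective y) :
    ∃ C > (0 : ℝ), ∃ κ₀ > (0 : ℝ), ∀ κ ≥ κ₀, IsUnit (A3 n y α κ) ∧
      ∀ k ℓ : EuclideanSpace ℝ (Fin 3), ‖k‖ = κ → ‖ℓ‖ = κ →
        ‖f3 n y α κ k ℓ -
            (κ : ℂ)⁻¹ * ∑ j, (-Complex.I / (2 * (Real.pi : ℂ) ^ 2)) *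
              Complex.exp (Complex.I * (inner ℝ (k - ℓ) (y j) : ℝ)) -
            ((κ : ℂ) ^ 2)⁻¹ *
              (-∑ j, 2 * α j / (Real.pi : ℂ) *
                  Complex.exp (Complex.I * (inner ℝ (k - ℓ) (y j) : ℝ)) +
               ∑ j, ∑ j', if j = j' then 0 else
                 Complex.exp (Complex.I * κ * ‖y j - y j'‖) /
                     (2 * (Real.pi : ℂ) ^ 2 * ‖y j - y j'‖) *
                   Complex.exp (Complex.I *
                     ((inner ℝ k (y j) : ℝ) - (inner ℝ ℓ (y j') : ℝ))))‖ ≤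
          C / κ ^ 3 := by
  classical
  have hπ : (0:ℝ) < Real.pi := Real.pi_pos
  have hπℂ : (Real.pi : ℂ) ≠ 0 := by exact_mod_cast hπ.ne'
  have hr : ∀ j j' : Fin n, j ≠ j' → 0 < ‖y j - y j'‖ := by
    intro j j' h
    rw [norm_pos_iff, sub_ne_zero]
    exact fun he => h (hy he)
  set c : Fin n → Fin n → ℝ :=
    fun j j' => if j = j' then ‖α j‖ else (4 * Real.pi * ‖y j - y j'‖)⁻¹ with hcdef
  have hc0 : ∀ j j', 0 ≤ c j j' := by
    intro j j'
    simp only [hcdef]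
    split_ifs
    · positivity
    · positivity
  set E : ℝ := ∑ j, ∑ j', c j j' with hEdef
  have hE0 : 0 ≤ E := Finset.sum_nonneg fun j _ => Finset.sum_nonneg fun j' _ => hc0 j j'
  clear_value c E
  have hWentry : ∀ (κ : ℝ) (j j' : Fin n), ‖W3 n y α κ j j'‖ ≤ c j j' := by
    intro κ j j'
    simp only [W3, hcdef]
    split_ifs with h
    · exact le_refl _
    · have hrp := hr j j' h
      have h1 : Complex.I * (κ:ℂ) * (‖y j - y j'‖:ℂ) = Complex.I * ((κ * ‖y j - y j'‖ : ℝ) : ℂ) := by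
        push_cast; ring
      have h2 : ((4:ℂ) * (Real.pi:ℂ) * (‖y j - y j'‖:ℂ)) = ((4 * Real.pi * ‖y j - y j'‖ : ℝ) : ℂ) := by
        push_cast; ring
      rw [norm_div, norm_neg, h1, cexp_norm, h2, Complex.norm_real]
      rw [Real.norm_eq_abs, abs_of_pos (by positivity)]
      rw [one_div]
  have hWnorm : ∀ κ : ℝ, ‖W3 n y α κ‖ ≤ E := by
    intro κ
    refine (norm_le_sum_entries _).trans ?_
    rw [hEdef]
    gcongr with j _ j' _
    exact hWentry κ j j'
  refine ⟨16 * n^2 * E^2 + 1, by positivity, 8 * Real.pi * (E + 1), by positivity, fun κ hκ => ?_⟩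
  have hκpos : 0 < κ := lt_of_lt_of_le (by positivity) hκ
  have hκℂ : (κ:ℂ) ≠ 0 := by exact_mod_cast hκpos.ne'
  set z : ℂ := Complex.I * κ / (4 * Real.pi) with hzdef
  set β : ℂ := ((-(4*Real.pi)/κ : ℝ) : ℂ) * Complex.I with hβdef
  have hzβ : z * β = 1 := by
    have hI : Complex.I * Complex.I = -1 := Complex.I_mul_I
    rw [hzdef, hβdef]
    push_cast
    field_simp
    linear_combination (-1:ℂ) * hI
  have hz : -z ≠ 0 := neg_ne_zero.mpr (left_ne_zero_of_mul_eq_one hzβ)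
  have hβnorm : ‖β‖ = 4 * Real.pi / κ := by
    rw [hβdef, norm_mul, Complex.norm_I, mul_one, Complex.norm_real, Real.norm_eq_abs,
      abs_div, abs_neg, abs_of_pos (by positivity), abs_of_pos hκpos]
  set W : Matrix (Fin n) (Fin n) ℂ := W3 n y α κ with hWdef
  set M : Matrix (Fin n) (Fin n) ℂ := β • W with hMdef
  clear_value z β W M
  have hWE : ‖W‖ ≤ E := by rw [hWdef]; exact hWnorm κ
  have hMnorm : ‖M‖ ≤ 1/2 := by
    rw [hMdef, norm_smul, hβnorm]
    have h1 : 4 * Real.pi / κ * ‖W‖ ≤ 4 * Real.pi / κ * E :=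
      mul_le_mul_of_nonneg_left hWE (by positivity)
    refine h1.trans ?_
    rw [div_mul_eq_mul_div, div_le_iff₀ hκpos]
    nlinarith [hπ, hE0, hκ]
  have hM1 : ‖M‖ < 1 := lt_of_le_of_lt hMnorm (by norm_num)
  haveI : CompleteSpace (Matrix (Fin n) (Fin n) ℂ) := FiniteDimensional.complete ℂ _
  set u : (Matrix (Fin n) (Fin n) ℂ)ˣ := Units.oneSub M hM1 with hudef
  set U : Matrix (Fin n) (Fin n) ℂ := ↑u⁻¹ with hUdef
  have hu_val : (u : Matrix (Fin n) (Fin n) ℂ) = 1 - M := rfl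
  have hmulU : (1 - M) * U = 1 := by rw [← hu_val, hUdef]; exact u.mul_inv
  clear_value U u
  have hUiter : U = 1 + M * U := by
    have h := hmulU
    rw [sub_mul, one_mul, sub_eq_iff_eq_add'] at h
    conv_lhs => rw [h]
    rw [add_comm]
  have hUnorm : ‖U‖ ≤ 2 := by
    have h1 : ‖U‖ ≤ ‖(1 : Matrix (Fin n) (Fin n) ℂ)‖ + ‖M * U‖ := by
      conv_lhs => rw [hUiter]
      exact norm_add_le _ _
    have h2 : ‖M * U‖ ≤ ‖M‖ * ‖U‖ := norm_mul_le _ _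
    have h3 : ‖M‖ * ‖U‖ ≤ (1/2) * ‖U‖ := mul_le_mul_of_nonneg_right hMnorm (norm_nonneg _)
    have h4 := norm_one_le (n := n)
    linarith
  have hdecomp : U = 1 + M + M * (M * U) := by
    calc U = 1 + M * U := hUiter
      _ = 1 + M * (1 + M * U) := by rw [← hUiter]; exact hUiter
      _ = 1 + M + M * (M * U) := by rw [mul_add, mul_one, add_assoc]
  have hABd : A3 n y α κ = (-z) • (1 - M) := by
    ext j j'
    simp only [hMdef, hWdef, Matrix.smul_apply, Matrix.sub_apply, Matrix.one_apply, smul_eq_mul]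
    by_cases h : j = j'
    · simp only [A3, W3, if_pos h]
      linear_combination (-(α j)) * hzβ + hzdef
    · simp only [A3, W3, if_neg h]
      linear_combination (Complex.exp (Complex.I * κ * ‖y j - y j'‖) / (4 * Real.pi * ‖y j - y j'‖)) * hzβ
  have hmul1 : A3 n y α κ * ((-z)⁻¹ • U) = 1 := by
    rw [hABd, Matrix.smul_mul, Matrix.mul_smul, hmulU, smul_smul, mul_inv_cancel₀ hz, one_smul]
  constructor
  · haveI := invertibleOfRightInverse _ _ hmul1
    exact isUnit_of_invertible _
  intro k ℓ hk hℓ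
  have hAinv : (A3 n y α κ)⁻¹ = (-β) • U := by
    have h1 := Matrix.inv_eq_right_inv hmul1
    have h2 : (-z)⁻¹ = -β := by
      rw [inv_neg, inv_eq_of_mul_eq_one_right hzβ]
    rw [h1, h2]
  set SS : Matrix (Fin n) (Fin n) ℂ → ℂ := fun P => ∑ j, ∑ j', P j j' *
    (Complex.exp (Complex.I * ((inner ℝ k (y j') : ℝ) : ℂ)) *
     Complex.exp (-Complex.I * ((inner ℝ ℓ (y j) : ℝ) : ℂ))) with hSS
  have SS_smul : ∀ (t : ℂ) (P : Matrix (Fin n) (Fin n) ℂ), SS (t • P) = t * SS P := by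
    intro t P
    simp only [hSS, Matrix.smul_apply, smul_eq_mul, Finset.mul_sum, mul_assoc]
  have SS_add : ∀ P Q : Matrix (Fin n) (Fin n) ℂ, SS (P + Q) = SS P + SS Q := by
    intro P Q
    simp only [hSS, Matrix.add_apply, add_mul, Finset.sum_add_distrib]
  clear_value SS
  have hf3 : f3 n y α κ k ℓ = ((2 * Real.pi : ℂ) ^ 3)⁻¹ * -SS (A3 n y α κ)⁻¹ := by
    simp only [f3, q3]
    congr 1
    simp only [hSS, Matrix.mulVec, dotProduct]
    rw [← Finset.sum_neg_distrib]
    refine Finset.sum_congr rfl fun j _ => ?_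
    rw [Finset.sum_mul, ← Finset.sum_neg_distrib]
    refine Finset.sum_congr rfl fun j' _ => ?_
    ring
  have hMM : M * (M * U) = (β * β) • (W * (W * U)) := by
    rw [hMdef, Matrix.smul_mul, Matrix.smul_mul, Matrix.mul_smul, smul_smul]
  have hSSdecomp : SS (A3 n y α κ)⁻¹ =
      -β * (SS 1 + β * SS W + (β * β) * SS (W * (W * U))) := by
    rw [hAinv, SS_smul]
    conv_lhs => rw [hdecomp]
    rw [SS_add, SS_add, hMM, SS_smul, hMdef, SS_smul]
  have hker : ∀ j : Fin n, Complex.exp (Complex.I * ((inner ℝ (k - ℓ) (y j) : ℝ) : ℂ)) =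
      Complex.exp (Complex.I * ((inner ℝ k (y j) : ℝ) : ℂ)) *
      Complex.exp (-Complex.I * ((inner ℝ ℓ (y j) : ℝ) : ℂ)) := by
    intro j
    rw [← Complex.exp_add]
    congr 1
    rw [inner_sub_left]
    push_cast
    ring
  have hs1 : (κ:ℂ)⁻¹ * (-Complex.I / (2 * (Real.pi:ℂ)^2)) = ((2 * Real.pi : ℂ)^3)⁻¹ * β := by
    rw [hβdef]; push_cast; field_simp; ring
  have hs2 : ((κ:ℂ)^2)⁻¹ * (-2/(Real.pi:ℂ)) = ((2 * Real.pi : ℂ)^3)⁻¹ * (β * β) := by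
    have hI : Complex.I * Complex.I = -1 := Complex.I_mul_I
    rw [hβdef]; push_cast; field_simp
    linear_combination (-16:ℂ) * hI
  have hT1 : (κ : ℂ)⁻¹ * ∑ j, (-Complex.I / (2 * (Real.pi : ℂ) ^ 2)) *
        Complex.exp (Complex.I * (inner ℝ (k - ℓ) (y j) : ℝ)) =
      ((2 * Real.pi : ℂ) ^ 3)⁻¹ * (β * SS 1) := by
    have hSS1 : SS 1 = ∑ j, Complex.exp (Complex.I * ((inner ℝ k (y j) : ℝ) : ℂ)) *
        Complex.exp (-Complex.I * ((inner ℝ ℓ (y j) : ℝ) : ℂ)) := by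
      simp only [hSS, Matrix.one_apply, ite_mul, one_mul, zero_mul, Finset.sum_ite_eq,
        Finset.mem_univ, if_true]
    rw [hSS1, Finset.mul_sum, Finset.mul_sum, Finset.mul_sum]
    refine Finset.sum_congr rfl fun j _ => ?_
    rw [hker j]
    linear_combination (Complex.exp (Complex.I * ((inner ℝ k (y j) : ℝ) : ℂ)) *
      Complex.exp (-Complex.I * ((inner ℝ ℓ (y j) : ℝ) : ℂ))) * hs1
  have hs3 : ∀ R : ℝ, R ≠ 0 → ((κ:ℂ)^2)⁻¹ * (1/(2*(Real.pi:ℂ)^2*(R:ℂ))) =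
      ((2 * Real.pi : ℂ)^3)⁻¹ * (β * (β * (-1/(4*(Real.pi:ℂ)*(R:ℂ))))) := by
    intro R hR
    have hRC : (R:ℂ) ≠ 0 := by exact_mod_cast hR
    have hI : Complex.I * Complex.I = -1 := Complex.I_mul_I
    have hβ2 : β * β = -(16 * (Real.pi:ℂ)^2 / (κ:ℂ)^2) := by
      rw [hβdef]; push_cast
      linear_combination (16 * (Real.pi:ℂ)^2 / (κ:ℂ)^2) * hI
    rw [show β * (β * (-1/(4*(Real.pi:ℂ)*(R:ℂ)))) =
        (β*β) * (-1/(4*(Real.pi:ℂ)*(R:ℂ))) from by ring, hβ2]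
    have e1 : ((κ:ℂ)^2)⁻¹ * (1/(2*(Real.pi:ℂ)^2*(R:ℂ))) =
        1 / ((κ:ℂ)^2 * (2*(Real.pi:ℂ)^2*(R:ℂ))) := by
      rw [one_div, one_div, ← mul_inv]
    have e2 : ((2 * Real.pi : ℂ)^3)⁻¹ * (-(16 * (Real.pi:ℂ)^2 / (κ:ℂ)^2) * (-1/(4*(Real.pi:ℂ)*(R:ℂ)))) =
        (16 * (Real.pi:ℂ)^2) / ((2 * Real.pi : ℂ)^3 * ((κ:ℂ)^2 * (4*(Real.pi:ℂ)*(R:ℂ)))) := by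
      rw [neg_div, neg_mul_neg, div_mul_div_comm, inv_mul_eq_div, div_div]
      ring
    have hd1 : (κ:ℂ)^2 * (2*(Real.pi:ℂ)^2*(R:ℂ)) ≠ 0 :=
      mul_ne_zero (pow_ne_zero _ hκℂ)
        (mul_ne_zero (mul_ne_zero (by norm_num) (pow_ne_zero _ hπℂ)) hRC)
    have hd2 : (2 * (Real.pi:ℂ))^3 * ((κ:ℂ)^2 * (4*(Real.pi:ℂ)*(R:ℂ))) ≠ 0 :=
      mul_ne_zero (pow_ne_zero _ (mul_ne_zero (by norm_num) hπℂ))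
        (mul_ne_zero (pow_ne_zero _ hκℂ) (mul_ne_zero (mul_ne_zero (by norm_num) hπℂ) hRC))
    rw [e1, e2, div_eq_div_iff hd1 hd2]
    ring
  have hT2 : ((κ : ℂ) ^ 2)⁻¹ *
        (-∑ j, 2 * α j / (Real.pi : ℂ) *
            Complex.exp (Complex.I * (inner ℝ (k - ℓ) (y j) : ℝ)) +
         ∑ j, ∑ j', if j = j' then 0 else
           Complex.exp (Complex.I * κ * ‖y j - y j'‖) /
               (2 * (Real.pi : ℂ) ^ 2 * ‖y j - y j'‖) *
             Complex.exp (Complex.I *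
               ((inner ℝ k (y j) : ℝ) - (inner ℝ ℓ (y j') : ℝ)))) =
      ((2 * Real.pi : ℂ) ^ 3)⁻¹ * (β * (β * SS W)) := by
    have hB : (∑ j, ∑ j' : Fin n, if j = j' then 0 else
          Complex.exp (Complex.I * κ * ‖y j - y j'‖) /
              (2 * (Real.pi : ℂ) ^ 2 * ‖y j - y j'‖) *
            Complex.exp (Complex.I *
              ((inner ℝ k (y j) : ℝ) - (inner ℝ ℓ (y j') : ℝ)))) =
        ∑ j, ∑ j' : Fin n, if j' = j then 0 else
          Complex.exp (Complex.I * κ * ‖y j' - y j‖) /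
              (2 * (Real.pi : ℂ) ^ 2 * ‖y j' - y j‖) *
            Complex.exp (Complex.I *
              ((inner ℝ k (y j') : ℝ) - (inner ℝ ℓ (y j) : ℝ))) := Finset.sum_comm
    have hA : (-∑ j, 2 * α j / (Real.pi : ℂ) *
          Complex.exp (Complex.I * (inner ℝ (k - ℓ) (y j) : ℝ))) =
        ∑ j, ∑ j' : Fin n, (if j = j' then -(2 * α j / (Real.pi : ℂ) *
          Complex.exp (Complex.I * (inner ℝ (k - ℓ) (y j) : ℝ))) else 0) := by
      rw [← Finset.sum_neg_distrib]
      refine Finset.sum_congr rfl fun j _ => ?_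
      simp
    rw [hA, hB, ← Finset.sum_add_distrib]
    simp only [hSS, Finset.mul_sum]
    refine Finset.sum_congr rfl fun j _ => ?_
    rw [← Finset.sum_add_distrib, Finset.mul_sum]
    refine Finset.sum_congr rfl fun j' _ => ?_
    by_cases h : j = j'
    · subst h
      simp only [eq_self_iff_true, if_true, add_zero]
      rw [hker j]
      have hW : W j j = α j := by simp [hWdef, W3]
      rw [hW]
      linear_combination (α j * (Complex.exp (Complex.I * ((inner ℝ k (y j) : ℝ) : ℂ)) *
        Complex.exp (-Complex.I * ((inner ℝ ℓ (y j) : ℝ) : ℂ)))) * hs2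
    · have h' : ¬ (j' = j) := fun he => h he.symm
      simp only [if_neg h, if_neg h', zero_add]
      have hW : W j j' = -Complex.exp (Complex.I * κ * ‖y j - y j'‖) /
          (4 * Real.pi * ‖y j - y j'‖) := by simp [hWdef, W3, h]
      rw [hW, norm_sub_rev (y j') (y j)]
      have hsplit : Complex.I * (((inner ℝ k (y j') : ℝ) : ℂ) - ((inner ℝ ℓ (y j) : ℝ) : ℂ)) =
          Complex.I * ((inner ℝ k (y j') : ℝ) : ℂ) +
          (-Complex.I * ((inner ℝ ℓ (y j) : ℝ) : ℂ)) := by ring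
      rw [hsplit, Complex.exp_add]
      linear_combination (Complex.exp (Complex.I * κ * ‖y j - y j'‖) *
        (Complex.exp (Complex.I * ((inner ℝ k (y j') : ℝ) : ℂ)) *
         Complex.exp (-Complex.I * ((inner ℝ ℓ (y j) : ℝ) : ℂ)))) *
        hs3 ‖y j - y j'‖ (hr j j' h).ne'
  have hkey : f3 n y α κ k ℓ -
      (κ : ℂ)⁻¹ * (∑ j, (-Complex.I / (2 * (Real.pi : ℂ) ^ 2)) *
        Complex.exp (Complex.I * (inner ℝ (k - ℓ) (y j) : ℝ))) -
      ((κ : ℂ) ^ 2)⁻¹ *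
        (-∑ j, 2 * α j / (Real.pi : ℂ) *
            Complex.exp (Complex.I * (inner ℝ (k - ℓ) (y j) : ℝ)) +
         ∑ j, ∑ j', if j = j' then 0 else
           Complex.exp (Complex.I * κ * ‖y j - y j'‖) /
               (2 * (Real.pi : ℂ) ^ 2 * ‖y j - y j'‖) *
             Complex.exp (Complex.I *
               ((inner ℝ k (y j) : ℝ) - (inner ℝ ℓ (y j') : ℝ)))) =
      ((2 * Real.pi : ℂ) ^ 3)⁻¹ * (β * (β * β)) * SS (W * (W * U)) := by
    rw [hf3, hSSdecomp, hT1, hT2]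
    ring
  rw [hkey]
  have hterm : ∀ j j' : Fin n, ‖(W * (W * U)) j j' *
      (Complex.exp (Complex.I * ((inner ℝ k (y j') : ℝ) : ℂ)) *
       Complex.exp (-Complex.I * ((inner ℝ ℓ (y j) : ℝ) : ℂ)))‖ ≤ E * (E * 2) := by
    intro j j'
    have hVnorm : ‖W * (W * U)‖ ≤ E * (E * 2) := by
      refine (norm_mul_le _ _).trans ?_
      have h1 : ‖W * U‖ ≤ E * 2 :=
        (norm_mul_le _ _).trans
          (mul_le_mul hWE hUnorm (norm_nonneg _) hE0)
      exact mul_le_mul hWE h1 (norm_nonneg _) hE0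
    have e1 : ‖Complex.exp (Complex.I * ((inner ℝ k (y j') : ℝ) : ℂ))‖ = 1 := cexp_norm _
    have e2 : ‖Complex.exp (-Complex.I * ((inner ℝ ℓ (y j) : ℝ) : ℂ))‖ = 1 := by
      have hh : -Complex.I * ((inner ℝ ℓ (y j) : ℝ) : ℂ) =
          Complex.I * ((-(inner ℝ ℓ (y j) : ℝ) : ℝ) : ℂ) := by push_cast; ring
      rw [hh, cexp_norm]
    rw [norm_mul, norm_mul, e1, e2, mul_one, mul_one]
    exact (entry_le_norm _ _ _).trans hVnorm
  have hSSV : ‖SS (W * (W * U))‖ ≤ (n:ℝ) * ((n:ℝ) * (E * (E * 2))) := by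
    rw [hSS]
    refine (norm_sum_le _ _).trans ?_
    refine (Finset.sum_le_sum fun j _ => (norm_sum_le _ _).trans
      (Finset.sum_le_sum fun j' _ => hterm j j')).trans ?_
    simp [Finset.sum_const, Fintype.card_fin, mul_assoc]
  have hc0norm : ‖((2 * Real.pi : ℂ) ^ 3)⁻¹‖ = ((2 * Real.pi) ^ 3)⁻¹ := by
    rw [norm_inv, norm_pow]
    have hh : (2 * Real.pi : ℂ) = ((2 * Real.pi : ℝ) : ℂ) := by push_cast; ring
    rw [hh, Complex.norm_real, Real.norm_eq_abs, abs_of_pos (by positivity)]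
  have hnorm_eq : ‖((2 * Real.pi : ℂ) ^ 3)⁻¹ * (β * (β * β)) * SS (W * (W * U))‖ =
      ((2 * Real.pi) ^ 3)⁻¹ * (4 * Real.pi / κ * (4 * Real.pi / κ * (4 * Real.pi / κ))) *
      ‖SS (W * (W * U))‖ := by
    rw [norm_mul, norm_mul, norm_mul, norm_mul, hc0norm, hβnorm]
  rw [hnorm_eq]
  exact arith_final (n:ℝ) E κ _ hE0 hκpos (Nat.cast_nonneg n) hSSV
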